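/- The number of edges of a complete r-partite graph on n vertices is maximized exactly when the part sizes are as equal as possible, i.e., each part has size ⌊n/r⌋ or ⌈n/r⌉ (the Turán graph T(n,r)). -/

import Mathlib

open SimpleGraph Finset

/-- `G` contains a copy of `F`. -/
def Graph.Contains {α β : Type*} (F : SimpleGraph α) (G : SimpleGraph β) : Prop :=
  ∃ f : α ↪ β, ∀ ⦃a b : α⦄, F.Adj a b → G.Adj (f a) (f b)

/-- The number of subgraphs of `G` isomorphic to `H`, i.e. `N(H, G)`. -/
noncomputable def Graph.copyCount {α β : Type*} (H : SimpleGraph α) (G : SimpleGraph β) : ℕ :=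
  Set.ncard {G' : G.Subgraph | Nonempty (H ≃g G'.coe)}

/-- The join `G + G'` of two graphs. -/
def Graph.join {α β : Type*} (G : SimpleGraph α) (H : SimpleGraph β) :
    SimpleGraph (α ⊕ β) where
  Adj x y :=
    match x, y with
    | Sum.inl a, Sum.inl b => G.Adj a b
    | Sum.inr a, Sum.inr b => H.Adj a b
    | Sum.inl _, Sum.inr _ => True
    | Sum.inr _, Sum.inl _ => True
  symm := ⟨by rintro (a | a) (b | b) h <;> simp_all <;> exact h.symm⟩
  loopless := ⟨by rintro (a | a) h <;> simp_all⟩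

/-- `s` is the minimum size of a color class over proper `(r+1)`-colorings of `F` (σ(F) = s). -/
def Graph.IsSigma {α : Type*} (F : SimpleGraph α) (r s : ℕ) : Prop :=
  IsLeast {k : ℕ | ∃ (C : F.Coloring (Fin (r + 1))) (i : Fin (r + 1)),
    k = {v | C v = i}.ncard} s

/-- among complete `r`-partite graphs on `n` vertices, the number of edges is
maximized exactly when all part sizes are `⌊n/r⌋` or `⌈n/r⌉`, i.e. by the Turán graph. -/

private lemma sum_sigma_fst {r : ℕ} (c : Fin r → ℕ) (f : Fin r → ℕ) :
    ∑ v : Σ i, Fin (c i), f v.1 = ∑ i, c i * f i := by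
  rw [← Finset.univ_sigma_univ, Finset.sum_sigma]
  simp [mul_comm]

private lemma twice_edges_cmp (r : ℕ) (c : Fin r → ℕ) :
    2 * (completeMultipartiteGraph (fun i : Fin r => Fin (c i))).edgeSet.ncard
      + ∑ i, (c i)^2 = (∑ i, c i)^2 := by
  classical
  set G := completeMultipartiteGraph (fun i : Fin r => Fin (c i)) with hG
  have hcard : G.edgeSet.ncard = G.edgeFinset.card := Set.ncard_eq_toFinset_card' _
  rw [hcard, ← SimpleGraph.sum_degrees_eq_twice_card_edges]
  have hdeg : ∀ v : Σ i, Fin (c i),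
      G.degree v = ∑ j, c j * (if v.1 ≠ j then 1 else 0) := by
    intro v
    rw [SimpleGraph.degree, neighborFinset_eq_filter, Finset.card_filter]
    have : ∀ w : Σ i, Fin (c i), (if G.Adj v w then (1:ℕ) else 0)
        = (fun j => if v.1 ≠ j then 1 else 0) w.1 := by
      intro w; simp [hG, completeMultipartiteGraph]
    simp_rw [this]
    rw [sum_sigma_fst c (fun j => if v.fst ≠ j then 1 else 0)]
  simp_rw [hdeg]
  rw [sum_sigma_fst c (fun i => ∑ j : Fin r, c j * if i ≠ j then 1 else 0)]
  have expand : ∀ i : Fin r, c i * ∑ j, c j * (if i ≠ j then 1 else 0)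
      = ∑ j, (if i ≠ j then c i * c j else 0) := by
    intro i; rw [Finset.mul_sum]; congr 1; funext j; split_ifs <;> ring
  simp_rw [expand]
  have sq : (∑ i, c i)^2 = ∑ i, ∑ j, c i * c j := by
    rw [sq, Finset.sum_mul_sum]
  rw [sq, ← Finset.sum_add_distrib]
  congr 1; funext i
  have : (c i)^2 = ∑ j, (if i = j then c i * c j else 0) := by
    rw [Finset.sum_ite_eq]; simp [pow_two]
  rw [this, ← Finset.sum_add_distrib]
  congr 1; funext j
  split_ifs with h <;> simp_all

private lemma twice_edges_turan (n r : ℕ) (hr : 1 ≤ r) :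
    2 * (turanGraph n r).edgeSet.ncard
      + ∑ i ∈ Finset.range r, (n / r + if i < n % r then 1 else 0)^2 = n^2 := by
  classical
  have hcard : (turanGraph n r).edgeSet.ncard = (turanGraph n r).edgeFinset.card :=
    Set.ncard_eq_toFinset_card' _
  rw [hcard, ← SimpleGraph.sum_degrees_eq_twice_card_edges]
  set cnt : ℕ → ℕ := fun k => ((Finset.range n).filter (fun w => w % r = k)).card with hcnt
  have hcntval : ∀ k, k < r → cnt k = n / r + if k < n % r then 1 else 0 := by
    intro k hk
    have h1 : ((Finset.range n).filter (fun w => w % r = k)) =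
        ((Finset.range n).filter (fun w => w ≡ k [MOD r])) := by
      apply Finset.filter_congr
      intro x _
      unfold Nat.ModEq
      rw [Nat.mod_eq_of_lt hk]
    rw [hcnt]
    simp only [h1]
    rw [← Nat.count_eq_card_filter_range, Nat.count_modEq_card n hr, Nat.mod_eq_of_lt hk]
  have hdeg : ∀ v : Fin n, (turanGraph n r).degree v + cnt ((v : ℕ) % r) = n := by
    intro v
    rw [SimpleGraph.degree, neighborFinset_eq_filter]
    have h2 : cnt ((v : ℕ) % r) = (Finset.univ.filter
        (fun w : Fin n => ¬ (turanGraph n r).Adj v w)).card := by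
      rw [hcnt]
      simp only [Finset.card_filter]
      rw [← Fin.sum_univ_eq_sum_range (fun w => if w % r = (v : ℕ) % r then (1:ℕ) else 0) n]
      apply Finset.sum_congr rfl
      intro w _
      simp [turanGraph, eq_comm]
    rw [h2, Finset.card_filter_add_card_filter_not, Finset.card_univ, Fintype.card_fin]
  have hfiber : ∑ v : Fin n, cnt ((v : ℕ) % r) = ∑ i ∈ Finset.range r, cnt i * cnt i := by
    rw [Fin.sum_univ_eq_sum_range (fun w => cnt (w % r))]
    have h1 : ∀ w ∈ Finset.range n, cnt (w % r) =
        ∑ i ∈ Finset.range r, if w % r = i then cnt i else 0 := by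
      intro w _
      rw [Finset.sum_ite_eq, if_pos (Finset.mem_range.2 (Nat.mod_lt _ hr))]
    rw [Finset.sum_congr rfl h1, Finset.sum_comm]
    apply Finset.sum_congr rfl
    intro i _
    rw [← Finset.sum_filter, Finset.sum_const, smul_eq_mul, mul_comm]
  have hsum : ∑ v : Fin n, (turanGraph n r).degree v + ∑ i ∈ Finset.range r, cnt i * cnt i
      = n * n := by
    rw [← hfiber, ← Finset.sum_add_distrib]
    simp_rw [hdeg]
    simp [mul_comm]
  have h3 : ∑ i ∈ Finset.range r, (n / r + if i < n % r then 1 else 0)^2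
      = ∑ i ∈ Finset.range r, cnt i * cnt i := by
    apply Finset.sum_congr rfl
    intro i hi
    rw [hcntval i (Finset.mem_range.1 hi), pow_two]
  rw [h3, hsum, pow_two]

private lemma int_quad_nonneg (x : ℤ) : 0 ≤ x * (x - 1) := by
  rcases le_or_gt 1 x with h | h
  · nlinarith
  · have hx : x ≤ 0 := by omega
    nlinarith

private lemma sum_sq_min {r n : ℕ} (hr : 1 ≤ r) (c : Fin r → ℕ) (hsum : ∑ i, c i = n) :
    (∑ i ∈ Finset.range r, (n / r + if i < n % r then 1 else 0)^2 ≤ ∑ i, (c i)^2) ∧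
    ((∑ i ∈ Finset.range r, (n / r + if i < n % r then 1 else 0)^2 = ∑ i, (c i)^2) ↔
      ∀ i, c i = n / r ∨ c i = n / r + 1) := by
  set q := n / r with hq
  set m := n % r with hm
  have hmr : m < r := Nat.mod_lt _ hr
  have hnm : r * q + m = n := Nat.div_add_mod n r
  -- sum of the t values
  have htsum : ∑ i ∈ Finset.range r, (q + if i < m then 1 else 0) = n := by
    have h0 : ∑ i ∈ Finset.range r, (if i < m then 1 else 0) = m := by
      rw [← Finset.sum_filter]
      have : (Finset.range r).filter (· < m) = Finset.range m := by
        ext x; simp; omega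
      rw [this, Finset.sum_const, Finset.card_range, smul_eq_mul, mul_one]
    rw [Finset.sum_add_distrib, h0, Finset.sum_const, Finset.card_range, smul_eq_mul]
    omega
  -- cast everything to ℤ
  have htsq : (∑ i ∈ Finset.range r, ((q + if i < m then 1 else 0)^2 : ℤ))
      = (2 * q + 1) * n - r * (q * (q + 1)) := by
    have h1 : ∀ i ∈ Finset.range r, ((q + if i < m then 1 else 0)^2 : ℤ)
        = (2 * q + 1) * (q + if i < m then 1 else 0) - q * (q + 1) := by
      intro i _; split_ifs <;> ring
    rw [Finset.sum_congr rfl h1, Finset.sum_sub_distrib, ← Finset.mul_sum]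
    have h2 : ∑ i ∈ Finset.range r, ((q : ℤ) + if i < m then 1 else 0) = n := by
      have := htsum
      push_cast [← this]
      apply Finset.sum_congr rfl
      intro i _; split_ifs <;> simp
    rw [h2, Finset.sum_const, Finset.card_range]
    simp [nsmul_eq_mul]
  have hcsq : (∑ i, ((c i : ℤ))^2)
      = (2 * q + 1) * n - r * (q * (q + 1))
        + ∑ i, ((c i : ℤ) - q) * ((c i : ℤ) - q - 1) := by
    have h1 : ∀ i, ((c i : ℤ))^2 = (2 * q + 1) * (c i) - q * (q + 1)
        + ((c i : ℤ) - q) * ((c i : ℤ) - q - 1) := by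
      intro i; ring
    rw [Finset.sum_congr rfl (fun i _ => h1 i)]
    rw [Finset.sum_add_distrib, Finset.sum_sub_distrib, ← Finset.mul_sum]
    have h2 : ∑ i, ((c i : ℤ)) = n := by rw [← hsum]; push_cast; rfl
    rw [h2, Finset.sum_const, Finset.card_univ, Fintype.card_fin]
    simp [nsmul_eq_mul]
  have hA : 0 ≤ ∑ i, ((c i : ℤ) - q) * ((c i : ℤ) - q - 1) := by
    apply Finset.sum_nonneg
    intro i _
    have := int_quad_nonneg ((c i : ℤ) - q)
    linarith [this]
  constructor
  · have : (∑ i ∈ Finset.range r, ((q + if i < m then 1 else 0)^2 : ℤ)) ≤ ∑ i, ((c i : ℤ))^2 := by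
      rw [htsq, hcsq]; linarith
    have hcast : (∑ i ∈ Finset.range r, ((q + if i < m then 1 else 0)^2 : ℤ))
        = ((∑ i ∈ Finset.range r, (q + if i < m then 1 else 0)^2 : ℕ) : ℤ) := by
      push_cast
      apply Finset.sum_congr rfl
      intro i _; split_ifs <;> simp
    have hcast2 : (∑ i, ((c i : ℤ))^2) = ((∑ i, (c i)^2 : ℕ) : ℤ) := by push_cast; rfl
    rw [hcast, hcast2] at this
    exact_mod_cast this
  · have hcast : (∑ i ∈ Finset.range r, ((q + if i < m then 1 else 0)^2 : ℤ))
        = ((∑ i ∈ Finset.range r, (q + if i < m then 1 else 0)^2 : ℕ) : ℤ) := by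
      push_cast
      apply Finset.sum_congr rfl
      intro i _; split_ifs <;> simp
    have hcast2 : (∑ i, ((c i : ℤ))^2) = ((∑ i, (c i)^2 : ℕ) : ℤ) := by push_cast; rfl
    constructor
    · intro heq
      have heqz : (∑ i ∈ Finset.range r, ((q + if i < m then 1 else 0)^2 : ℤ))
          = ∑ i, ((c i : ℤ))^2 := by rw [hcast, hcast2]; exact_mod_cast heq
      rw [htsq, hcsq] at heqz
      have hz : ∑ i, ((c i : ℤ) - q) * ((c i : ℤ) - q - 1) = 0 := by linarith
      have := (Finset.sum_eq_zero_iff_of_nonneg (fun i _ =>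
        int_quad_nonneg ((c i : ℤ) - q))).1 hz
      intro i
      have hi := this i (Finset.mem_univ i)
      rcases mul_eq_zero.1 hi with h | h
      · left; have : (c i : ℤ) = q := by linarith
        exact_mod_cast this
      · right; have : (c i : ℤ) = q + 1 := by linarith
        exact_mod_cast this
    · intro hall
      have hz : ∀ i : Fin r, ((c i : ℤ) - q) * ((c i : ℤ) - q - 1) = 0 := by
        intro i
        rcases hall i with h | h <;> rw [h] <;> push_cast <;> ring
      have : (∑ i ∈ Finset.range r, ((q + if i < m then 1 else 0)^2 : ℤ))
          = ∑ i, ((c i : ℤ))^2 := by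
        rw [htsq, hcsq, Finset.sum_congr rfl (fun i _ => hz i)]
        simp
      rw [hcast, hcast2] at this
      exact_mod_cast this

private lemma ceil_div_eq (n r : ℕ) (hr : 1 ≤ r) :
    (n + r - 1) / r = n / r + (if n % r = 0 then 0 else 1) := by
  have hnm : r * (n / r) + n % r = n := Nat.div_add_mod n r
  by_cases h : n % r = 0
  · rw [if_pos h]
    have h1 : n + r - 1 = r * (n / r) + (r - 1) := by omega
    rw [h1, Nat.mul_add_div (by omega), Nat.div_eq_of_lt (show r - 1 < r by omega)]
  · rw [if_neg h]
    have h1 : n + r - 1 = r * (n / r) + (r + (n % r - 1)) := by omega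
    rw [h1, Nat.mul_add_div (by omega)]
    have h2 : (r + (n % r - 1)) / r = (n % r - 1) / r + 1 := Nat.add_div_left _ (by omega)
    have h3 : (n % r - 1) / r = 0 := Nat.div_eq_of_lt (by have := Nat.mod_lt n (y := r) (by omega); omega)
    omega


private lemma balanced_iff (n r : ℕ) (hr : 1 ≤ r) (c : Fin r → ℕ) (hsum : ∑ i, c i = n) :
    (∀ i, c i = n / r ∨ c i = n / r + 1) ↔ (∀ i, c i = n / r ∨ c i = (n + r - 1) / r) := by
  rw [ceil_div_eq n r hr]
  by_cases h : n % r = 0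
  · rw [if_pos h]
    constructor
    · intro hq i
      left
      rcases hq i with h1 | h1
      · exact h1
      · exfalso
        have hlt : ∑ _j : Fin r, n / r < ∑ j, c j := by
          apply Finset.sum_lt_sum
          · intro j _; rcases hq j with h2 | h2 <;> omega
          · exact ⟨i, Finset.mem_univ i, by omega⟩
        rw [Finset.sum_const, Finset.card_univ, Fintype.card_fin, smul_eq_mul, hsum] at hlt
        have := Nat.div_add_mod n r
        omega
    · intro hq i
      rcases hq i with h1 | h1 <;> omega
  · rw [if_neg h]

theorem stmt_9 (n r : ℕ) (hr : 1 ≤ r) (c : Fin r → ℕ) (hsum : ∑ i, c i = n) :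
    (completeMultipartiteGraph (fun i : Fin r => Fin (c i))).edgeSet.ncard ≤
      (turanGraph n r).edgeSet.ncard ∧
    ((completeMultipartiteGraph (fun i : Fin r => Fin (c i))).edgeSet.ncard =
        (turanGraph n r).edgeSet.ncard ↔
      ∀ i, c i = n / r ∨ c i = (n + r - 1) / r) := by
  have h1 := twice_edges_cmp r c
  rw [hsum] at h1
  have h2 := twice_edges_turan n r hr
  obtain ⟨hle, hiff⟩ := sum_sq_min hr c hsum
  refine ⟨by omega, ?_⟩
  have key : ((completeMultipartiteGraph (fun i : Fin r => Fin (c i))).edgeSet.ncard =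
      (turanGraph n r).edgeSet.ncard) ↔
      ((∑ i ∈ Finset.range r, (n / r + if i < n % r then 1 else 0)^2) = ∑ i, (c i)^2) := by
    omega
  rw [key, hiff]
  exact balanced_iff n r hr c hsum
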